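/- Let R be a field and c ∈ M_n(R) a diagonalizable matrix (over R) with eigenvalues λ_1,…,λ_k of multiplicities m_1,…,m_k. Then S_n(c,R) ≅ M_{m_1}(R) × ⋯ × M_{m_k}(R), and S_n(c,R)/R is a separable Frobenius extension. -/

import Mathlib

open Matrix

section FrobProd
variable {R : Type*} [Field R] {k : ℕ} {mult : Fin k → ℕ}

private lemma mul_single_trace (b : ∀ i : Fin k, Matrix (Fin (mult i)) (Fin (mult i)) R)
    (i : Fin k) (M : Matrix (Fin (mult i)) (Fin (mult i)) R) :
    ∑ l, ((b * (Pi.single i M : ∀ l : Fin k, Matrix (Fin (mult l)) (Fin (mult l)) R)) l).trace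
      = (b i * M).trace := by
  classical
  rw [Finset.sum_eq_single i]
  · simp
  · intro l _ hl
    simp [Pi.single_eq_of_ne hl]
  · simp

private lemma single_mul_trace (b : ∀ i : Fin k, Matrix (Fin (mult i)) (Fin (mult i)) R)
    (i : Fin k) (M : Matrix (Fin (mult i)) (Fin (mult i)) R) :
    ∑ l, (((Pi.single i M : ∀ l : Fin k, Matrix (Fin (mult l)) (Fin (mult l)) R) * b) l).trace
      = (M * b i).trace := by
  classical
  rw [Finset.sum_eq_single i]
  · simp
  · intro l _ hl
    simp [Pi.single_eq_of_ne hl]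
  · simp

private lemma trace_mul_std {m : ℕ} (M : Matrix (Fin m) (Fin m) R) (p q : Fin m) :
    (M * single p q 1).trace = M q p := by
  classical
  rw [Matrix.trace, Finset.sum_eq_single q]
  · simp [Matrix.diag]
  · intro l _ hl
    simp [Matrix.diag, Matrix.mul_single_apply_of_ne, hl]
  · simp

private lemma trace_std_mul {m : ℕ} (M : Matrix (Fin m) (Fin m) R) (p q : Fin m) :
    (single p q 1 * M).trace = M q p := by
  classical
  rw [Matrix.trace, Finset.sum_eq_single p]
  · simp [Matrix.diag]
  · intro l _ hl
    simp [Matrix.diag, Matrix.single_mul_apply_of_ne, hl]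
  · simp

private lemma sum_std_diag {m : ℕ} : ∑ p : Fin m, single p p (1 : R) = 1 := by
  classical
  ext a b
  rw [Matrix.sum_apply]
  by_cases h : a = b
  · subst h
    rw [Finset.sum_eq_single a] <;>
      simp +contextual [single, Matrix.one_apply, eq_comm]
  · rw [Finset.sum_eq_zero, Matrix.one_apply_ne h]
    intro p _
    simp only [single, of_apply]
    rw [if_neg]
    rintro ⟨rfl, rfl⟩
    exact h rfl

private lemma matrix_sum_smul {m : ℕ} (M : Matrix (Fin m) (Fin m) R) :
    ∑ pq : Fin m × Fin m, M pq.2 pq.1 • single pq.2 pq.1 (1 : R) = M := by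
  classical
  rw [Fintype.sum_prod_type]
  rw [Finset.sum_comm]
  conv_rhs => rw [matrix_eq_sum_single M]
  congr 1
  funext p
  congr 1
  funext q
  rw [smul_single, smul_eq_mul, mul_one]

private lemma matrix_sum_smul' {m : ℕ} (M : Matrix (Fin m) (Fin m) R) :
    ∑ pq : Fin m × Fin m, M pq.1 pq.2 • single pq.1 pq.2 (1 : R) = M := by
  classical
  rw [Fintype.sum_prod_type]
  conv_rhs => rw [matrix_eq_sum_single M]
  congr 1
  funext p
  congr 1
  funext q
  rw [smul_single, smul_eq_mul, mul_one]

/-- Frobenius/separability data for a finite product of matrix algebras. -/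
lemma frob_prod (hmult : ∀ i : Fin k, IsUnit ((mult i : ℕ) : R)) :
    ∃ (t : ℕ) (E : (∀ i : Fin k, Matrix (Fin (mult i)) (Fin (mult i)) R) →ₗ[R] R)
      (X Y : Fin t → ∀ i : Fin k, Matrix (Fin (mult i)) (Fin (mult i)) R)
      (e : ∀ i : Fin k, Matrix (Fin (mult i)) (Fin (mult i)) R),
      (∀ b, (∑ i : Fin t, E (b * X i) • Y i = b) ∧
        (∑ i : Fin t, E (Y i * b) • X i = b)) ∧
      ∑ i : Fin t, X i * e * Y i = 1 := by
  classical
  let ι := Σ i : Fin k, Fin (mult i) × Fin (mult i)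
  let σ : Fin (Fintype.card ι) ≃ ι := (Fintype.equivFin ι).symm
  let E : (∀ i : Fin k, Matrix (Fin (mult i)) (Fin (mult i)) R) →ₗ[R] R :=
    ∑ i : Fin k, (Matrix.traceLinearMap (Fin (mult i)) R R).comp (LinearMap.proj i)
  have hE : ∀ b, E b = ∑ l, (b l).trace := by
    intro b; simp [E, LinearMap.sum_apply]
  let X : ι → ∀ i : Fin k, Matrix (Fin (mult i)) (Fin (mult i)) R :=
    fun x => Pi.single x.1 (single x.2.1 x.2.2 1)
  let Y : ι → ∀ i : Fin k, Matrix (Fin (mult i)) (Fin (mult i)) R :=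
    fun x => Pi.single x.1 (single x.2.2 x.2.1 1)
  let e : ∀ i : Fin k, Matrix (Fin (mult i)) (Fin (mult i)) R :=
    fun i => (((mult i : ℕ) : R))⁻¹ • 1
  have hEX : ∀ b (x : ι), E (b * X x) = b x.1 x.2.2 x.2.1 := by
    intro b x
    rw [hE, mul_single_trace, trace_mul_std]
  have hEY : ∀ b (x : ι), E (Y x * b) = b x.1 x.2.1 x.2.2 := by
    intro b x
    rw [hE, single_mul_trace, trace_std_mul]
  refine ⟨Fintype.card ι, E, X ∘ σ, Y ∘ σ, e, ?_, ?_⟩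
  · intro b
    constructor
    · refine (Equiv.sum_comp σ (fun x : ι => E (b * X x) • Y x)).trans ?_
      funext j
      rw [Finset.sum_apply, ← Finset.univ_sigma_univ, Finset.sum_sigma]
      rw [Finset.sum_eq_single j]
      · simp only [hEX, Pi.smul_apply, Y, Pi.single_eq_same]
        exact matrix_sum_smul (b j)
      · intro l _ hl
        refine Finset.sum_eq_zero fun pq _ => ?_
        simp only [Pi.smul_apply, Y]
        rw [Pi.single_eq_of_ne hl.symm, smul_zero]
      · simp
    · refine (Equiv.sum_comp σ (fun x : ι => E (Y x * b) • X x)).trans ?_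
      funext j
      rw [Finset.sum_apply, ← Finset.univ_sigma_univ, Finset.sum_sigma]
      rw [Finset.sum_eq_single j]
      · simp only [hEY, Pi.smul_apply, X, Pi.single_eq_same]
        exact matrix_sum_smul' (b j)
      · intro l _ hl
        refine Finset.sum_eq_zero fun pq _ => ?_
        simp only [Pi.smul_apply, X]
        rw [Pi.single_eq_of_ne hl.symm, smul_zero]
      · simp
  · refine (Equiv.sum_comp σ (fun x : ι => X x * e * Y x)).trans ?_
    funext j
    rw [Finset.sum_apply, ← Finset.univ_sigma_univ, Finset.sum_sigma]
    rw [Finset.sum_eq_single j]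
    · have : ∀ pq : Fin (mult j) × Fin (mult j),
          (X ⟨j, pq⟩ * e * Y ⟨j, pq⟩) j
            = (((mult j : ℕ) : R))⁻¹ • single pq.1 pq.1 (1 : R) := by
        intro pq
        simp only [Pi.mul_apply, X, Y, e, Pi.single_eq_same]
        rw [Matrix.mul_smul, mul_one, Matrix.smul_mul, single_mul_single_same, one_mul]
      rw [Finset.sum_congr rfl fun pq _ => this pq]
      rw [Fintype.sum_prod_type]
      simp only [Finset.sum_const, Finset.card_univ, Fintype.card_fin]
      simp only [← Finset.smul_sum]
      rw [sum_std_diag, Pi.one_apply,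
        ← Nat.cast_smul_eq_nsmul R, smul_smul, mul_inv_cancel₀ ((hmult j).ne_zero), one_smul]
    · intro l _ hl
      refine Finset.sum_eq_zero fun pq _ => ?_
      simp only [Pi.mul_apply, X, Y]
      rw [Pi.single_eq_of_ne hl.symm, Pi.single_eq_of_ne hl.symm, zero_mul, mul_zero]
    · simp
end FrobProd


lemma frob_transport {R A B : Type*} [CommSemiring R] [Semiring A] [Semiring B]
    [Algebra R A] [Algebra R B] (φ : A ≃ₐ[R] B)
    (h : ∃ (t : ℕ) (E : B →ₗ[R] R) (X Y : Fin t → B) (e : B),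
      (∀ b, (∑ i : Fin t, E (b * X i) • Y i = b) ∧
        (∑ i : Fin t, E (Y i * b) • X i = b)) ∧
      ∑ i : Fin t, X i * e * Y i = 1) :
    ∃ (t : ℕ) (E : A →ₗ[R] R) (X Y : Fin t → A) (e : A),
      (∀ b, (∑ i : Fin t, E (b * X i) • Y i = b) ∧
        (∑ i : Fin t, E (Y i * b) • X i = b)) ∧
      ∑ i : Fin t, X i * e * Y i = 1 := by
  obtain ⟨t, E, X, Y, e, h1, h2⟩ := h
  refine ⟨t, E.comp φ.toLinearMap, fun i => φ.symm (X i), fun i => φ.symm (Y i),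
    φ.symm e, fun b => ⟨?_, ?_⟩, ?_⟩
  · apply φ.injective
    rw [_root_.map_sum]
    simp only [_root_.map_smul, LinearMap.comp_apply, AlgEquiv.toLinearMap_apply,
      _root_.map_mul, AlgEquiv.apply_symm_apply]
    exact (h1 (φ b)).1
  · apply φ.injective
    rw [_root_.map_sum]
    simp only [_root_.map_smul, LinearMap.comp_apply, AlgEquiv.toLinearMap_apply,
      _root_.map_mul, AlgEquiv.apply_symm_apply]
    exact (h1 (φ b)).2
  · apply φ.injective
    rw [_root_.map_sum, _root_.map_one]
    simp only [_root_.map_mul, AlgEquiv.apply_symm_apply]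
    exact h2


open Matrix

set_option maxHeartbeats 1000000 in
lemma centralizer_iso (R : Type*) [Field R] [DecidableEq R] (n k : ℕ)
    (c : Matrix (Fin n) (Fin n) R) (lam : Fin k → R) (mult : Fin k → ℕ)
    (hlam : Function.Injective lam)
    (hdiag : ∃ (u v : Matrix (Fin n) (Fin n) R) (d : Fin n → R),
      u * v = 1 ∧ v * u = 1 ∧
      c = v * Matrix.diagonal d * u ∧
      (∀ p : Fin n, ∃ i : Fin k, d p = lam i) ∧
      (∀ i : Fin k, (Finset.univ.filter (fun p : Fin n => d p = lam i)).card = mult i)) :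
    Nonempty ((Subalgebra.centralizer R {c}) ≃ₐ[R]
        (∀ i : Fin k, Matrix (Fin (mult i)) (Fin (mult i)) R)) := by
  classical
  obtain ⟨u, v, d, huv, hvu, hc, hd, hcard⟩ := hdiag
  -- the index function
  choose g hg using hd
  have hgd : ∀ p i, g p = i ↔ d p = lam i := by
    intro p i
    constructor
    · rintro rfl; exact hg p
    · intro h; exact hlam ((hg p).symm.trans h)
  -- equivalences between fibers and `Fin (mult i)`
  have hcard' : ∀ i : Fin k, Fintype.card {p : Fin n // g p = i} = mult i := by
    intro i
    rw [Fintype.card_subtype]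
    rw [← hcard i]
    congr 1
    apply Finset.filter_congr
    intro p _
    simp [hgd p i]
  let τ : ∀ i : Fin k, {p : Fin n // g p = i} ≃ Fin (mult i) :=
    fun i => Fintype.equivFinOfCardEq (hcard' i)
  let σ : Fin n ≃ Σ i : Fin k, Fin (mult i) :=
    (Equiv.sigmaFiberEquiv g).symm.trans (Equiv.sigmaCongrRight τ)
  have hσ1 : ∀ p : Fin n, (σ p).1 = g p := fun p => rfl
  -- the block-diagonal algebra hom
  let Φ₀ : (∀ i : Fin k, Matrix (Fin (mult i)) (Fin (mult i)) R) →+*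
      Matrix (Fin n) (Fin n) R :=
    ((Matrix.reindexAlgEquiv R R σ.symm).toRingEquiv.toRingHom).comp
      (Matrix.blockDiagonal'RingHom (fun i => Fin (mult i)) R)
  have hΦ₀smul : ∀ (r : R) x, Φ₀ (r • x) = r • Φ₀ x := by
    intro r x
    show (Matrix.reindexAlgEquiv R R σ.symm) (Matrix.blockDiagonal' (r • x))
        = r • (Matrix.reindexAlgEquiv R R σ.symm) (Matrix.blockDiagonal' x)
    rw [Matrix.blockDiagonal'_smul, _root_.map_smul]
  let Φ : (∀ i : Fin k, Matrix (Fin (mult i)) (Fin (mult i)) R) →ₐ[R]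
      Matrix (Fin n) (Fin n) R := AlgHom.mk' Φ₀ hΦ₀smul
  have hΦapp : ∀ N p q, Φ N p q = Matrix.blockDiagonal' N (σ p) (σ q) := by
    intro N p q
    rfl
  have hΦinj : Function.Injective Φ := by
    intro x y hxy
    apply Matrix.blockDiagonal'_injective
    ext ik jk
    have := congrArg (fun M : Matrix (Fin n) (Fin n) R => M (σ.symm ik) (σ.symm jk)) hxy
    simpa only [hΦapp, Equiv.apply_symm_apply] using this
  -- range of Φ is the centralizer of `diagonal d`
  have hxcomm : ∀ x : Matrix (Fin n) (Fin n) R,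
      (Matrix.diagonal d * x = x * Matrix.diagonal d) ↔
        ∀ p q, d p ≠ d q → x p q = 0 := by
    intro x
    constructor
    · intro h p q hpq
      have := congrArg (fun M : Matrix (Fin n) (Fin n) R => M p q) h
      simp only [Matrix.diagonal_mul, Matrix.mul_diagonal] at this
      by_contra h0
      rw [mul_comm (x p q) (d q)] at this
      exact hpq (mul_right_cancel₀ h0 this)
    · intro h
      ext p q
      simp only [Matrix.diagonal_mul, Matrix.mul_diagonal]
      by_cases hdq : d p = d q
      · rw [hdq, mul_comm]
      · rw [h p q hdq, mul_zero, zero_mul]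
  have hrange : Φ.range = Subalgebra.centralizer R {Matrix.diagonal d} := by
    apply le_antisymm
    · rintro y ⟨N, rfl⟩
      rw [Subalgebra.mem_centralizer_iff]
      rintro z hz
      rw [Set.mem_singleton_iff] at hz
      subst hz
      rw [hxcomm]
      intro p q hpq
      show Φ N p q = 0
      rw [hΦapp]
      rcases hp : σ p with ⟨i, a⟩
      rcases hq : σ q with ⟨i', b⟩
      have hii' : i ≠ i' := by
        rintro rfl
        apply hpq
        rw [hg p, hg q, ← hσ1 p, ← hσ1 q, hp, hq]
      exact Matrix.blockDiagonal'_apply_ne N a b hii'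
    · intro x hx
      rw [Subalgebra.mem_centralizer_iff] at hx
      have hx' := (hxcomm x).mp (hx (Matrix.diagonal d) rfl)
      refine ⟨fun i a b => x (σ.symm ⟨i, a⟩) (σ.symm ⟨i, b⟩), ?_⟩
      ext p q
      show Φ (fun i a b => x (σ.symm ⟨i, a⟩) (σ.symm ⟨i, b⟩)) p q = x p q
      refine (hΦapp _ p q).trans ?_
      rcases hp : σ p with ⟨i, a⟩
      rcases hq : σ q with ⟨i', b⟩
      by_cases hii' : i = i'
      · subst hii'
        refine (Matrix.blockDiagonal'_apply_eq _ _ _ _).trans ?_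
        rw [← hp, ← hq, Equiv.symm_apply_apply, Equiv.symm_apply_apply]
      · refine (Matrix.blockDiagonal'_apply_ne _ _ _ hii').trans ?_
        refine (hx' p q ?_).symm
        rw [hg p, hg q, ← hσ1 p, ← hσ1 q, hp, hq]
        intro hll
        exact hii' (hlam hll)
  -- the inner automorphism by `v, u`
  let ψ : Matrix (Fin n) (Fin n) R ≃ₐ[R] Matrix (Fin n) (Fin n) R :=
    { toFun := fun x => v * x * u
      invFun := fun y => u * y * v
      left_inv := by
        intro x
        calc u * (v * x * u) * v = (u * v) * x * (u * v) := by noncomm_ring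
        _ = x := by rw [huv, one_mul, mul_one]
      right_inv := by
        intro y
        calc v * (u * y * v) * u = (v * u) * y * (v * u) := by noncomm_ring
        _ = y := by rw [hvu, one_mul, mul_one]
      map_mul' := by
        intro x y
        calc v * (x * y) * u = v * x * (u * v) * y * u := by rw [huv]; noncomm_ring
        _ = (v * x * u) * (v * y * u) := by noncomm_ring
      map_add' := by intro x y; noncomm_ring
      commutes' := by
        intro r
        simp only [Algebra.algebraMap_eq_smul_one]
        rw [Matrix.mul_smul, mul_one, Matrix.smul_mul, hvu] }
  have hψD : ψ (Matrix.diagonal d) = c := by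
    simp only [ψ, AlgEquiv.coe_mk, Equiv.coe_fn_mk, hc]
  have hmap : (Subalgebra.centralizer R {Matrix.diagonal d}).map (ψ : _ →ₐ[R] _)
      = Subalgebra.centralizer R {c} := by
    ext y
    rw [Subalgebra.mem_map]
    constructor
    · rintro ⟨x, hx, rfl⟩
      rw [Subalgebra.mem_centralizer_iff]
      rintro z hz
      rw [Set.mem_singleton_iff] at hz
      rw [hz]
      have hxd := (Subalgebra.mem_centralizer_iff (R := R)).mp hx (Matrix.diagonal d) rfl
      show c * ψ x = ψ x * c
      rw [← hψD, ← _root_.map_mul, ← _root_.map_mul, hxd]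
    · intro hy
      have hyc := (Subalgebra.mem_centralizer_iff (R := R)).mp hy c rfl
      refine ⟨ψ.symm y, ?_, ψ.apply_symm_apply y⟩
      rw [Subalgebra.mem_centralizer_iff]
      rintro z hz
      rw [Set.mem_singleton_iff] at hz
      rw [hz]
      apply ψ.injective
      rw [_root_.map_mul, _root_.map_mul, hψD, ψ.apply_symm_apply, hyc]
  exact ⟨((((AlgEquiv.ofInjective Φ hΦinj).trans
      (Subalgebra.equivOfEq _ _ hrange)).trans
      (AlgEquiv.subalgebraMap ψ (Subalgebra.centralizer R {Matrix.diagonal d}))).trans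
      (Subalgebra.equivOfEq _ _ hmap)).symm⟩

set_option synthInstance.maxHeartbeats 1000000 in
/-- If `c ∈ M_n(R)` is diagonalizable over the field `R` with distinct eigenvalues
`λ_1,…,λ_k` of multiplicities `m_1,…,m_k` (each invertible in `R`), then
`S_n(c,R) ≅ M_{m_1}(R) × ⋯ × M_{m_k}(R)`, and `S_n(c,R)/R` is a separable Frobenius
extension. -/
theorem stmt_17 (R : Type*) [Field R] [DecidableEq R] (n k : ℕ)
    (c : Matrix (Fin n) (Fin n) R) (lam : Fin k → R) (mult : Fin k → ℕ)
    (hlam : Function.Injective lam)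
    (hdiag : ∃ (u v : Matrix (Fin n) (Fin n) R) (d : Fin n → R),
      u * v = 1 ∧ v * u = 1 ∧
      c = v * Matrix.diagonal d * u ∧
      (∀ p : Fin n, ∃ i : Fin k, d p = lam i) ∧
      (∀ i : Fin k, (Finset.univ.filter (fun p : Fin n => d p = lam i)).card = mult i))
    (hmult : ∀ i : Fin k, IsUnit ((mult i : ℕ) : R)) :
    Nonempty ((Subalgebra.centralizer R {c}) ≃ₐ[R]
        (∀ i : Fin k, Matrix (Fin (mult i)) (Fin (mult i)) R)) ∧
    ∃ (t : ℕ) (E : Subalgebra.centralizer R {c} →ₗ[R] R)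
      (X Y : Fin t → Subalgebra.centralizer R {c})
      (e : Subalgebra.centralizer R {c}),
      (∀ b : Subalgebra.centralizer R {c},
        (∑ i : Fin t, E (b * X i) • Y i = b) ∧
        (∑ i : Fin t, E (Y i * b) • X i = b)) ∧
      ∑ i : Fin t, X i * e * Y i = 1 := by
  obtain ⟨φ⟩ := centralizer_iso R n k c lam mult hlam hdiag
  exact ⟨⟨φ⟩, frob_transport φ (frob_prod hmult)⟩
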